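/- There exists a unique function X : ℝ² → ℂ^{d×d} satisfying X(t,s) = 0 for t < s and X(t,s) = I_d + Σ_{j=1}^N D_j(t) X(t−τ_j, s) for t ≥ s. Moreover, X is continuous at every point (t,s) ∈ ℝ² such that t − s ∉ F, where F := { Σ_{ℓ=1}^N n_ℓ τ_ℓ : (n_1, …, n_N) ∈ ℕ^N }. -/

import Mathlib

open Set
open scoped Matrix.Norms.L2Operator

/-- The lattice `F = { ∑ ℓ n_ℓ τ_ℓ : n ∈ ℕ^{N+1} }` generated by the delays. -/
def delayLattice {N : ℕ} (τ : Fin (N + 1) → ℝ) : Set ℝ :=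
  {x : ℝ | ∃ n : Fin (N + 1) → ℕ, x = ∑ ℓ, (n ℓ : ℝ) * τ ℓ}

section Aux

variable {d N : ℕ} (τ : Fin (N + 1) → ℝ) (D : Fin (N + 1) → ℝ → Matrix (Fin d) (Fin d) ℂ)

lemma delayLattice_zero : (0 : ℝ) ∈ delayLattice τ :=
  ⟨0, by simp⟩

lemma delayLattice_shift {x : ℝ} (j : Fin (N + 1)) (h : x - τ j ∈ delayLattice τ) :
    x ∈ delayLattice τ := by
  obtain ⟨m, hm⟩ := h
  refine ⟨fun ℓ => m ℓ + if ℓ = j then 1 else 0, ?_⟩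
  have : ∑ ℓ, ((m ℓ + if ℓ = j then 1 else 0 : ℕ) : ℝ) * τ ℓ
      = ∑ ℓ, (m ℓ : ℝ) * τ ℓ + ∑ ℓ, (if ℓ = j then (1:ℝ) else 0) * τ ℓ := by
    rw [← Finset.sum_add_distrib]
    congr 1; funext ℓ; push_cast; ring
  rw [this, ← hm]
  have : ∑ ℓ, (if ℓ = j then (1:ℝ) else 0) * τ ℓ = τ j := by
    simp [ite_mul]
  rw [this]; ring

/-- Iterative approximation of the fundamental solution. -/
noncomputable def fsIter : ℕ → ℝ → ℝ → Matrix (Fin d) (Fin d) ℂ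
  | 0 => fun _ _ => 0
  | (n + 1) => fun t s => if t < s then 0 else 1 + ∑ j, D j t * fsIter n (t - τ j) s

variable (hτpos : ∀ j, 0 < τ j) (hτmono : StrictMono τ)

include hτpos hτmono in
lemma fsIter_key : ∀ n : ℕ, ∀ t s : ℝ, t - s < n * τ 0 →
    fsIter τ D (n + 1) t s = fsIter τ D n t s := by
  intro n
  induction n with
  | zero =>
    intro t s h
    have : t < s := by simpa [sub_neg] using h
    simp [fsIter, this]
  | succ n ih =>
    intro t s h
    show fsIter τ D (n + 2) t s = fsIter τ D (n + 1) t s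
    simp only [fsIter]
    by_cases hts : t < s
    · simp [hts]
    · simp only [hts, if_neg, if_false]
      congr 1
      refine Finset.sum_congr rfl fun j _ => ?_
      congr 1
      apply ih
      have h0j : τ 0 ≤ τ j := hτmono.monotone (Fin.zero_le j)
      have := hτpos 0
      push_cast at h ⊢
      linarith

include hτpos hτmono in
lemma fsIter_stab_le : ∀ n m : ℕ, n ≤ m → ∀ t s : ℝ, t - s < n * τ 0 →
    fsIter τ D n t s = fsIter τ D m t s := by
  intro n m hnm
  induction m, hnm using Nat.le_induction with
  | base => intro t s _; rfl
  | succ m hnm ih =>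
    intro t s h
    rw [ih t s h, fsIter_key τ D hτpos hτmono m t s]
    have : (n : ℝ) * τ 0 ≤ (m : ℝ) * τ 0 :=
      mul_le_mul_of_nonneg_right (by exact_mod_cast hnm) (hτpos 0).le
    linarith

include hτpos hτmono in
lemma fsIter_stab {n m : ℕ} {t s : ℝ} (hn : t - s < n * τ 0) (hm : t - s < m * τ 0) :
    fsIter τ D n t s = fsIter τ D m t s := by
  rcases le_total n m with h | h
  · exact fsIter_stab_le τ D hτpos hτmono n m h t s hn
  · exact (fsIter_stab_le τ D hτpos hτmono m n h t s hm).symm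

/-- The fundamental solution. -/
noncomputable def fsSol (t s : ℝ) : Matrix (Fin d) (Fin d) ℂ :=
  fsIter τ D (⌈(t - s) / τ 0⌉₊ + 1) t s

include hτpos in
lemma fsSol_bound (t s : ℝ) : t - s ≤ (⌈(t - s) / τ 0⌉₊ : ℝ) * τ 0 := by
  have h0 := hτpos 0
  rw [← div_le_iff₀ h0]
  exact Nat.le_ceil _

include hτpos hτmono in
lemma fsSol_eq_iter {n : ℕ} {t s : ℝ} (h : t - s < n * τ 0) :
    fsSol τ D t s = fsIter τ D n t s := by
  apply fsIter_stab τ D hτpos hτmono _ h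
  have := fsSol_bound τ hτpos t s
  have h0 := hτpos 0
  push_cast
  linarith

include hτpos in
lemma fsSol_neg {t s : ℝ} (h : t < s) : fsSol τ D t s = 0 := by
  unfold fsSol
  simp [fsIter, h]

include hτpos hτmono in
lemma fsSol_eq {t s : ℝ} (h : s ≤ t) :
    fsSol τ D t s = 1 + ∑ j, D j t * fsSol τ D (t - τ j) s := by
  have h0 := hτpos 0
  set k := ⌈(t - s) / τ 0⌉₊ with hk
  have hb : t - s ≤ (k : ℝ) * τ 0 := fsSol_bound τ hτpos t s
  have hts : ¬ t < s := not_lt.mpr h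
  unfold fsSol
  rw [show fsIter τ D (k + 1) t s = if t < s then 0 else 1 + ∑ j, D j t * fsIter τ D k (t - τ j) s
    from rfl, if_neg hts]
  congr 1
  refine Finset.sum_congr rfl fun j _ => ?_
  congr 1
  have h0j : τ 0 ≤ τ j := hτmono.monotone (Fin.zero_le j)
  have hj : (t - τ j) - s < (k : ℝ) * τ 0 := by linarith
  exact (fsSol_eq_iter τ D hτpos hτmono hj).symm

include hτpos hτmono in
lemma fs_unique (Y : ℝ → ℝ → Matrix (Fin d) (Fin d) ℂ)
    (h0 : ∀ t s : ℝ, t < s → Y t s = 0)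
    (heq : ∀ t s : ℝ, s ≤ t → Y t s = 1 + ∑ j, D j t * Y (t - τ j) s) :
    Y = fsSol τ D := by
  have key : ∀ n : ℕ, ∀ t s : ℝ, t - s < n * τ 0 → Y t s = fsSol τ D t s := by
    intro n
    induction n with
    | zero =>
      intro t s h
      have hts : t < s := by simpa [sub_neg] using h
      rw [h0 t s hts, fsSol_neg τ D hτpos hts]
    | succ n ih =>
      intro t s h
      by_cases hts : t < s
      · rw [h0 t s hts, fsSol_neg τ D hτpos hts]
      · push_neg at hts
        rw [heq t s hts, fsSol_eq τ D hτpos hτmono hts]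
        congr 1
        refine Finset.sum_congr rfl fun j _ => ?_
        congr 1
        apply ih
        have h0j : τ 0 ≤ τ j := hτmono.monotone (Fin.zero_le j)
        have := hτpos 0
        push_cast at h ⊢
        linarith
  funext t s
  have := hτpos 0
  have hb := fsSol_bound τ hτpos t s
  exact key (⌈(t - s) / τ 0⌉₊ + 1) t s (by push_cast; linarith)

include hτpos hτmono in
lemma fs_cont (hD : ∀ j, Continuous (D j)) (X : ℝ → ℝ → Matrix (Fin d) (Fin d) ℂ)
    (h0 : ∀ t s : ℝ, t < s → X t s = 0)
    (heq : ∀ t s : ℝ, s ≤ t → X t s = 1 + ∑ j, D j t * X (t - τ j) s) :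
    ∀ n : ℕ, ∀ p : ℝ × ℝ, p.1 - p.2 < n * τ 0 → p.1 - p.2 ∉ delayLattice τ →
      ContinuousAt (fun q : ℝ × ℝ => X q.1 q.2) p := by
  have hlt : ∀ p : ℝ × ℝ, p.1 < p.2 → ContinuousAt (fun q : ℝ × ℝ => X q.1 q.2) p := by
    intro p hp
    have hev : (fun q : ℝ × ℝ => X q.1 q.2) =ᶠ[nhds p] fun _ => (0 : Matrix (Fin d) (Fin d) ℂ) := by
      filter_upwards [(isOpen_lt continuous_fst continuous_snd).mem_nhds hp] with q hq
      exact h0 q.1 q.2 hq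
    exact continuousAt_const.congr hev.symm
  intro n
  induction n with
  | zero =>
    intro p h _
    exact hlt p (by simpa [sub_neg] using h)
  | succ n ih =>
    intro p h hF
    rcases lt_trichotomy p.1 p.2 with hp | hp | hp
    · exact hlt p hp
    · exact absurd (by rw [hp, sub_self]; exact delayLattice_zero τ) hF
    · have hev : (fun q : ℝ × ℝ => X q.1 q.2) =ᶠ[nhds p]
          fun q : ℝ × ℝ => 1 + ∑ j, D j q.1 * X (q.1 - τ j) q.2 := by
        filter_upwards [(isOpen_lt continuous_snd continuous_fst).mem_nhds hp] with q hq
        exact heq q.1 q.2 (le_of_lt hq)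
      refine ContinuousAt.congr ?_ hev.symm
      refine continuousAt_const.add ?_
      apply tendsto_finset_sum
      intro j _
      have hinner : ContinuousAt (fun q : ℝ × ℝ => X q.1 q.2) (p.1 - τ j, p.2) := by
        apply ih
        · have h0j : τ 0 ≤ τ j := hτmono.monotone (Fin.zero_le j)
          have := hτpos 0
          push_cast at h ⊢
          linarith
        · intro hmem
          exact hF (delayLattice_shift τ j (by simpa [sub_right_comm] using hmem))
      have hcomp : ContinuousAt (fun q : ℝ × ℝ => X (q.1 - τ j) q.2) p := by
        have hmap : Continuous (fun q : ℝ × ℝ => (q.1 - τ j, q.2)) :=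
          (continuous_fst.sub continuous_const).prodMk continuous_snd
        exact ContinuousAt.comp (g := fun q : ℝ × ℝ => X q.1 q.2)
          (f := fun q : ℝ × ℝ => (q.1 - τ j, q.2)) hinner hmap.continuousAt
      exact (((hD j).comp continuous_fst).continuousAt).mul hcomp

end Aux

/-- **Existence, uniqueness and continuity off the lattice of the fundamental solution.**

There exists a unique `X : ℝ² → ℂ^{d×d}` with `X t s = 0` for `t < s` and
`X t s = I_d + ∑ j, D j t * X (t - τ j) s` for `t ≥ s`. Moreover `X` is continuous
at every `(t,s)` with `t - s ∉ F`, `F` the lattice generated by the delays. -/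
theorem fundamental_solution_exists_unique_and_continuity
    (d N : ℕ) (hd : 0 < d)
    (τ : Fin (N + 1) → ℝ) (hτpos : ∀ j, 0 < τ j) (hτmono : StrictMono τ)
    (D : Fin (N + 1) → ℝ → Matrix (Fin d) (Fin d) ℂ) (hD : ∀ j, Continuous (D j)) :
    (∃! X : ℝ → ℝ → Matrix (Fin d) (Fin d) ℂ,
        (∀ t s : ℝ, t < s → X t s = 0) ∧
        (∀ t s : ℝ, s ≤ t → X t s = 1 + ∑ j, D j t * X (t - τ j) s)) ∧
    (∀ X : ℝ → ℝ → Matrix (Fin d) (Fin d) ℂ,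
        ((∀ t s : ℝ, t < s → X t s = 0) ∧
          (∀ t s : ℝ, s ≤ t → X t s = 1 + ∑ j, D j t * X (t - τ j) s)) →
        ∀ p : ℝ × ℝ, p.1 - p.2 ∉ delayLattice τ →
          ContinuousAt (fun q : ℝ × ℝ => X q.1 q.2) p) := by
  constructor
  · refine ⟨fsSol τ D, ⟨fun t s h => fsSol_neg τ D hτpos h,
      fun t s h => fsSol_eq τ D hτpos hτmono h⟩, fun Y hY => fs_unique τ D hτpos hτmono Y hY.1 hY.2⟩
  · intro X hX p hp
    have h0 := hτpos 0
    have hb := fsSol_bound τ hτpos p.1 p.2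
    exact fs_cont τ D hτpos hτmono hD X hX.1 hX.2 (⌈(p.1 - p.2) / τ 0⌉₊ + 1) p
      (by push_cast; linarith) hp
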